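/- arXiv:1506.08420 — 2 statements merged into one kernel-verified Lean document; each statement's English description precedes it below -/
import Mathlib

section
/- Let A be a linearly ordered group and G a directed po-group. Then the restricted Wreath product A wr G satisfies RDP (respectively RDP₁, respectively RDP₂) if and only if G satisfies RDP (respectively RDP₁, respectively RDP₂). -/
/-! Riesz decomposition properties relative to explicit multiplication `mul`,
unit `one`, and order relation `le`, together with the lexicographic product
order and (unrestricted/restricted, right/left) wreath products of po-groups. -/

/-- The Riesz decomposition property (RDP). -/
def RDPWith {M : Type*} (mul : M → M → M) (one : M) (le : M → M → Prop) : Prop :=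
  ∀ a₁ a₂ b₁ b₂ : M,
    le one a₁ → le one a₂ → le one b₁ → le one b₂ → mul a₁ a₂ = mul b₁ b₂ →
    ∃ c₁₁ c₁₂ c₂₁ c₂₂ : M,
      le one c₁₁ ∧ le one c₁₂ ∧ le one c₂₁ ∧ le one c₂₂ ∧
      a₁ = mul c₁₁ c₁₂ ∧ a₂ = mul c₂₁ c₂₂ ∧ b₁ = mul c₁₁ c₂₁ ∧ b₂ = mul c₁₂ c₂₂

/-- The Riesz decomposition property RDP₁ (commutativity below the
cross-diagonal entries `c₁₂`, `c₂₁`). -/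
def RDP1With {M : Type*} (mul : M → M → M) (one : M) (le : M → M → Prop) : Prop :=
  ∀ a₁ a₂ b₁ b₂ : M,
    le one a₁ → le one a₂ → le one b₁ → le one b₂ → mul a₁ a₂ = mul b₁ b₂ →
    ∃ c₁₁ c₁₂ c₂₁ c₂₂ : M,
      le one c₁₁ ∧ le one c₁₂ ∧ le one c₂₁ ∧ le one c₂₂ ∧
      a₁ = mul c₁₁ c₁₂ ∧ a₂ = mul c₂₁ c₂₂ ∧ b₁ = mul c₁₁ c₂₁ ∧ b₂ = mul c₁₂ c₂₂ ∧
      (∀ x y : M, le one x → le x c₁₂ → le one y → le y c₂₁ → mul x y = mul y x)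

/-- The Riesz decomposition property RDP₂ (the infimum of `c₁₂` and `c₂₁`
exists and equals `one`; the last clause, together with `le one c₁₂` and
`le one c₂₁`, says exactly that `one` is the greatest lower bound). -/
def RDP2With {M : Type*} (mul : M → M → M) (one : M) (le : M → M → Prop) : Prop :=
  ∀ a₁ a₂ b₁ b₂ : M,
    le one a₁ → le one a₂ → le one b₁ → le one b₂ → mul a₁ a₂ = mul b₁ b₂ →
    ∃ c₁₁ c₁₂ c₂₁ c₂₂ : M,
      le one c₁₁ ∧ le one c₁₂ ∧ le one c₂₁ ∧ le one c₂₂ ∧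
      a₁ = mul c₁₁ c₁₂ ∧ a₂ = mul c₂₁ c₂₂ ∧ b₁ = mul c₁₁ c₂₁ ∧ b₂ = mul c₁₂ c₂₂ ∧
      (∀ z : M, le z c₁₂ → le z c₂₁ → le z one)

/-- RDP for the sub-po-group carried by the subset `S`. -/
def RDPWithOn {M : Type*} (S : Set M) (mul : M → M → M) (one : M)
    (le : M → M → Prop) : Prop :=
  ∀ a₁ a₂ b₁ b₂ : M, a₁ ∈ S → a₂ ∈ S → b₁ ∈ S → b₂ ∈ S →
    le one a₁ → le one a₂ → le one b₁ → le one b₂ → mul a₁ a₂ = mul b₁ b₂ →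
    ∃ c₁₁ c₁₂ c₂₁ c₂₂ : M, c₁₁ ∈ S ∧ c₁₂ ∈ S ∧ c₂₁ ∈ S ∧ c₂₂ ∈ S ∧
      le one c₁₁ ∧ le one c₁₂ ∧ le one c₂₁ ∧ le one c₂₂ ∧
      a₁ = mul c₁₁ c₁₂ ∧ a₂ = mul c₂₁ c₂₂ ∧ b₁ = mul c₁₁ c₂₁ ∧ b₂ = mul c₁₂ c₂₂

/-- RDP₁ for the sub-po-group carried by the subset `S`. -/
def RDP1WithOn {M : Type*} (S : Set M) (mul : M → M → M) (one : M)
    (le : M → M → Prop) : Prop :=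
  ∀ a₁ a₂ b₁ b₂ : M, a₁ ∈ S → a₂ ∈ S → b₁ ∈ S → b₂ ∈ S →
    le one a₁ → le one a₂ → le one b₁ → le one b₂ → mul a₁ a₂ = mul b₁ b₂ →
    ∃ c₁₁ c₁₂ c₂₁ c₂₂ : M, c₁₁ ∈ S ∧ c₁₂ ∈ S ∧ c₂₁ ∈ S ∧ c₂₂ ∈ S ∧
      le one c₁₁ ∧ le one c₁₂ ∧ le one c₂₁ ∧ le one c₂₂ ∧
      a₁ = mul c₁₁ c₁₂ ∧ a₂ = mul c₂₁ c₂₂ ∧ b₁ = mul c₁₁ c₂₁ ∧ b₂ = mul c₁₂ c₂₂ ∧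
      (∀ x y : M, x ∈ S → y ∈ S →
        le one x → le x c₁₂ → le one y → le y c₂₁ → mul x y = mul y x)

/-- RDP₂ for the sub-po-group carried by the subset `S`. -/
def RDP2WithOn {M : Type*} (S : Set M) (mul : M → M → M) (one : M)
    (le : M → M → Prop) : Prop :=
  ∀ a₁ a₂ b₁ b₂ : M, a₁ ∈ S → a₂ ∈ S → b₁ ∈ S → b₂ ∈ S →
    le one a₁ → le one a₂ → le one b₁ → le one b₂ → mul a₁ a₂ = mul b₁ b₂ →
    ∃ c₁₁ c₁₂ c₂₁ c₂₂ : M, c₁₁ ∈ S ∧ c₁₂ ∈ S ∧ c₂₁ ∈ S ∧ c₂₂ ∈ S ∧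
      le one c₁₁ ∧ le one c₁₂ ∧ le one c₂₁ ∧ le one c₂₂ ∧
      a₁ = mul c₁₁ c₁₂ ∧ a₂ = mul c₂₁ c₂₂ ∧ b₁ = mul c₁₁ c₂₁ ∧ b₂ = mul c₁₂ c₂₂ ∧
      (∀ z : M, z ∈ S → le z c₁₂ → le z c₂₁ → le z one)

/-- The Riesz interpolation property (RIP). -/
def RIPWith {M : Type*} (le : M → M → Prop) : Prop :=
  ∀ a₁ a₂ b₁ b₂ : M, le a₁ b₁ → le a₁ b₂ → le a₂ b₁ → le a₂ b₂ →
    ∃ c : M, le a₁ c ∧ le a₂ c ∧ le c b₁ ∧ le c b₂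

/-- RIP for the subposet carried by the subset `S`. -/
def RIPWithOn {M : Type*} (S : Set M) (le : M → M → Prop) : Prop :=
  ∀ a₁ a₂ b₁ b₂ : M, a₁ ∈ S → a₂ ∈ S → b₁ ∈ S → b₂ ∈ S →
    le a₁ b₁ → le a₁ b₂ → le a₂ b₁ → le a₂ b₂ →
    ∃ c ∈ S, le a₁ c ∧ le a₂ c ∧ le c b₁ ∧ le c b₂

/-- The lexicographic order on a product: `(g₁,h₁) ≤ (g₂,h₂)` iff `g₁ < g₂`,
or `g₁ = g₂` and `h₁ ≤ h₂`. -/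
def lexLE {A B : Type*} [PartialOrder A] [LE B] (p q : A × B) : Prop :=
  p.1 < q.1 ∨ (p.1 = q.1 ∧ p.2 ≤ q.2)

/-- A poset is an antilattice if only comparable pairs of elements have a
join or a meet. -/
def IsAntilattice (G : Type*) [PartialOrder G] : Prop :=
  ∀ a b : G, ((∃ s, IsLUB {a, b} s) ∨ (∃ s, IsGLB {a, b} s)) → a ≤ b ∨ b ≤ a

/-- Multiplication of the unrestricted Wreath product `A Wr G`:
`(n,⟨g_a⟩)·(m,⟨h_a⟩) = (n·m, ⟨g_a·h_{a·n}⟩)`. -/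
def wrMul {A G : Type*} [Mul A] [Mul G] (p q : A × (A → G)) : A × (A → G) :=
  (p.1 * q.1, fun a => p.2 a * q.2 (a * p.1))

/-- The unit of the Wreath product `A Wr G`. -/
def wrOne (A G : Type*) [One A] [One G] : A × (A → G) :=
  (1, fun _ => 1)

/-- The order of the Wreath product `A Wr G`: `(n,⟨g_a⟩) ≤ (m,⟨h_a⟩)` iff
`n < m`, or `n = m` and `g_a ≤ h_a` for all `a`. -/
def wrLE {A G : Type*} [PartialOrder A] [LE G] (p q : A × (A → G)) : Prop :=
  p.1 < q.1 ∨ (p.1 = q.1 ∧ ∀ a, p.2 a ≤ q.2 a)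

/-- The carrier of the restricted Wreath product `A wr G`: elements whose
second component equals `1` at all but finitely many places. -/
def wrS (A G : Type*) [One G] : Set (A × (A → G)) :=
  {p | (Function.mulSupport p.2).Finite}

/-- Multiplication of the wreath products over `ℤ`:
`(n,⟨g_i⟩)·(m,⟨h_i⟩) = (n+m, ⟨g_i·h_{i+n}⟩)`. -/
def zwrMul {G : Type*} [Mul G] (p q : ℤ × (ℤ → G)) : ℤ × (ℤ → G) :=
  (p.1 + q.1, fun i => p.2 i * q.2 (i + p.1))

/-- The unit of the wreath products over `ℤ`. -/
def zwrOne (G : Type*) [One G] : ℤ × (ℤ → G) :=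
  (0, fun _ => 1)

/-- The inverse in the wreath products over `ℤ`. -/
def zwrInv {G : Type*} [Inv G] (p : ℤ × (ℤ → G)) : ℤ × (ℤ → G) :=
  (-p.1, fun i => (p.2 (i - p.1))⁻¹)

/-- The carrier of the (restricted) wreath products over `ℤ`: elements with
`g_i = 1` for all but finitely many `i`. -/
def zwrS (G : Type*) [One G] : Set (ℤ × (ℤ → G)) :=
  {p | (Function.mulSupport p.2).Finite}

/-- Strict positivity in the right wreath product `ℤ →wr G`: either `n > 0`,
or `n = 0`, some `g_i ≠ 1`, and `g_j > 1` where `j` is the greatest index `i`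
with `g_i ≠ 1`. -/
def rPos {G : Type*} [One G] [LT G] (p : ℤ × (ℤ → G)) : Prop :=
  0 < p.1 ∨ (p.1 = 0 ∧ ∃ j : ℤ, 1 < p.2 j ∧ ∀ i : ℤ, j < i → p.2 i = 1)

/-- Strict positivity in the left wreath product `ℤ ←wr G`: either `n > 0`,
or `n = 0`, some `g_i ≠ 1`, and `g_j > 1` where `j` is the least index `i`
with `g_i ≠ 1`. -/
def lPos {G : Type*} [One G] [LT G] (p : ℤ × (ℤ → G)) : Prop :=
  0 < p.1 ∨ (p.1 = 0 ∧ ∃ j : ℤ, 1 < p.2 j ∧ ∀ i : ℤ, i < j → p.2 i = 1)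

/-- The order of the right wreath product `ℤ →wr G`. -/
def rLE {G : Type*} [Group G] [LT G] (p q : ℤ × (ℤ → G)) : Prop :=
  p = q ∨ rPos (zwrMul (zwrInv p) q)

/-- The order of the left wreath product `ℤ ←wr G`. -/
def lLE {G : Type*} [Group G] [LT G] (p q : ℤ × (ℤ → G)) : Prop :=
  p = q ∨ lPos (zwrMul (zwrInv p) q)

section WrAux

set_option linter.unusedSectionVars false
set_option maxHeartbeats 1000000

open Function

variable {A G : Type*} [Group A] [LinearOrder A]
    [CovariantClass A A (· * ·) (· ≤ ·)]
    [CovariantClass A A (Function.swap (· * ·)) (· ≤ ·)]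
    [Group G] [PartialOrder G]
    [CovariantClass G G (· * ·) (· ≤ ·)]
    [CovariantClass G G (Function.swap (· * ·)) (· ≤ ·)]

theorem wrAux_one_le_fst {c : A × (A → G)} (h : wrLE (wrOne A G) c) : 1 ≤ c.1 := by
  rcases h with h | ⟨h, -⟩
  · exact le_of_lt h
  · exact le_of_eq h

theorem wrAux_snd_pos {c : A × (A → G)} (h : wrLE (wrOne A G) c) (h1 : c.1 = 1) :
    ∀ a, 1 ≤ c.2 a := by
  rcases h with h | ⟨-, hp⟩
  · simp [wrOne, h1] at h
  · exact hp

theorem wrAux_le_refl (p : A × (A → G)) : wrLE p p := Or.inr ⟨rfl, fun _ => le_rfl⟩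

theorem wrAux_mul_one (p : A × (A → G)) : wrMul p (wrOne A G) = p := by
  cases p with
  | mk n f => simp [wrMul, wrOne]

theorem wrAux_one_mul (p : A × (A → G)) : wrMul (wrOne A G) p = p := by
  cases p with
  | mk n f => simp [wrMul, wrOne]

theorem wrAux_le_antisymm {p q : A × (A → G)} (h : wrLE p q) (h' : wrLE q p) : p = q := by
  rcases h with h | ⟨h1, h2⟩ <;> rcases h' with h' | ⟨h1', h2'⟩
  · exact absurd (h.trans h') (lt_irrefl _)
  · exact absurd (h1' ▸ h) (lt_irrefl _)
  · exact absurd (h1 ▸ h') (lt_irrefl _)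
  · exact Prod.ext h1 (funext fun a => le_antisymm (h2 a) (h2' a))

theorem wrAux_one_mem : wrOne A G ∈ wrS A G := by
  show (Function.mulSupport fun _ : A => (1 : G)).Finite
  simp [Function.mulSupport]

/-- The canonical embedding of `G` into the wreath product. -/
def wrDelta (A : Type*) {G : Type*} [Group A] [LinearOrder A] [One G] (g : G) :
    A × (A → G) :=
  (1, fun a => if a = 1 then g else 1)

theorem wrDelta_mem (g : G) : wrDelta A g ∈ wrS A G := by
  show (Function.mulSupport fun a : A => if a = 1 then g else 1).Finite
  apply Set.Finite.subset (Set.finite_singleton (1 : A))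
  intro a ha
  simp only [Function.mem_mulSupport] at ha
  simp only [Set.mem_singleton_iff]
  by_contra hne
  rw [if_neg hne] at ha
  exact ha rfl

theorem wrDelta_mul (x y : G) : wrMul (wrDelta A x) (wrDelta A y) = wrDelta A (x * y) := by
  unfold wrMul wrDelta
  refine Prod.ext (one_mul 1) (funext fun a => ?_)
  by_cases h : a = 1 <;> simp [h]

theorem wrDelta_pos {g : G} (h : 1 ≤ g) : wrLE (wrOne A G) (wrDelta A g) := by
  refine Or.inr ⟨rfl, fun a => ?_⟩
  show (1 : G) ≤ if a = 1 then g else 1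
  by_cases ha : a = 1 <;> simp [ha, h]

theorem wrDelta_snd_one (g : G) : (wrDelta A g).2 1 = g := by simp [wrDelta]

end WrAux
section WrConstr

set_option linter.unusedSectionVars false
set_option maxHeartbeats 1000000

open Function

variable {A G : Type*} [Group A] [LinearOrder A]
    [CovariantClass A A (· * ·) (· ≤ ·)]
    [CovariantClass A A (Function.swap (· * ·)) (· ≤ ·)]
    [Group G] [PartialOrder G]
    [CovariantClass G G (· * ·) (· ≤ ·)]
    [CovariantClass G G (Function.swap (· * ·)) (· ≤ ·)]

theorem wrAux_constr_lt {n₁ n₂ m₁ m₂ : A} {f₁ f₂ h₁ h₂ : A → G}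
    (hf₁ : (Function.mulSupport f₁).Finite) (hf₂ : (Function.mulSupport f₂).Finite)
    (hh₁ : (Function.mulSupport h₁).Finite)
    (hlt : m₁ < n₁)
    (hx₂ : wrLE (wrOne A G) (n₂, f₂)) (hy₁ : wrLE (wrOne A G) (m₁, h₁))
    (hE : wrMul (n₁, f₁) (n₂, f₂) = wrMul (m₁, h₁) (m₂, h₂)) :
    ∃ c₁₁ c₁₂ c₂₂ : A × (A → G), c₁₁ ∈ wrS A G ∧ c₁₂ ∈ wrS A G ∧ c₂₂ ∈ wrS A G ∧
      wrLE (wrOne A G) c₁₁ ∧ wrLE (wrOne A G) c₁₂ ∧ wrLE (wrOne A G) c₂₂ ∧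
      (n₁, f₁) = wrMul c₁₁ c₁₂ ∧ (n₂, f₂) = wrMul (wrOne A G) c₂₂ ∧
      (m₁, h₁) = wrMul c₁₁ (wrOne A G) ∧ (m₂, h₂) = wrMul c₁₂ c₂₂ := by
  have hA : n₁ * n₂ = m₁ * m₂ := congrArg Prod.fst hE
  have hF : ∀ a, f₁ a * f₂ (a * n₁) = h₁ a * h₂ (a * m₁) :=
    fun a => congrFun (congrArg Prod.snd hE) a
  refine ⟨(m₁, h₁), (m₁⁻¹ * n₁, fun b => (h₁ (b * m₁⁻¹))⁻¹ * f₁ (b * m₁⁻¹)),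
    (n₂, f₂), hh₁, ?_, hf₂, hy₁, Or.inl ?_, hx₂, ?_, ?_, ?_, ?_⟩
  · -- membership of c₁₂
    show (Function.mulSupport fun b => (h₁ (b * m₁⁻¹))⁻¹ * f₁ (b * m₁⁻¹)).Finite
    apply Set.Finite.subset (((hh₁.union hf₁).image (fun x => x * m₁)))
    intro b hb
    rw [Function.mem_mulSupport] at hb
    have hor : h₁ (b * m₁⁻¹) ≠ 1 ∨ f₁ (b * m₁⁻¹) ≠ 1 := by
      by_contra hc
      push_neg at hc
      rw [hc.1, hc.2] at hb
      simp at hb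
    refine ⟨b * m₁⁻¹, ?_, by simp⟩
    rcases hor with h | h
    · exact Or.inl h
    · exact Or.inr h
  · -- positivity of c₁₂ first component
    show (wrOne A G).1 < m₁⁻¹ * n₁
    show (1 : A) < m₁⁻¹ * n₁
    rw [lt_inv_mul_iff_lt]
    exact hlt
  · -- (n₁, f₁) = c₁₁ * c₁₂
    refine Prod.ext ?_ (funext fun a => ?_)
    · show n₁ = m₁ * (m₁⁻¹ * n₁)
      rw [mul_inv_cancel_left]
    · show f₁ a = h₁ a * ((h₁ (a * m₁ * m₁⁻¹))⁻¹ * f₁ (a * m₁ * m₁⁻¹))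
      rw [mul_inv_cancel_right, mul_inv_cancel_left]
  · rw [wrAux_one_mul]
  · rw [wrAux_mul_one]
  · -- (m₂, h₂) = c₁₂ * c₂₂
    refine Prod.ext ?_ (funext fun a => ?_)
    · show m₂ = m₁⁻¹ * n₁ * n₂
      rw [mul_assoc, hA, inv_mul_cancel_left]
    · show h₂ a = (h₁ (a * m₁⁻¹))⁻¹ * f₁ (a * m₁⁻¹) * f₂ (a * (m₁⁻¹ * n₁))
      have key := hF (a * m₁⁻¹)
      rw [inv_mul_cancel_right] at key
      rw [mul_assoc, ← mul_assoc a, key, inv_mul_cancel_left]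

end WrConstr
section WrConstr2

set_option linter.unusedSectionVars false
set_option maxHeartbeats 1000000

open Function

variable {A G : Type*} [Group A] [LinearOrder A]
    [CovariantClass A A (· * ·) (· ≤ ·)]
    [CovariantClass A A (Function.swap (· * ·)) (· ≤ ·)]
    [Group G] [PartialOrder G]
    [CovariantClass G G (· * ·) (· ≤ ·)]
    [CovariantClass G G (Function.swap (· * ·)) (· ≤ ·)]

theorem wrAux_constr_eq (Q : G → G → Prop)
    (hG : ∀ a₁ a₂ b₁ b₂ : G, 1 ≤ a₁ → 1 ≤ a₂ → 1 ≤ b₁ → 1 ≤ b₂ → a₁ * a₂ = b₁ * b₂ →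
      ∃ c₁₁ c₁₂ c₂₁ c₂₂ : G, 1 ≤ c₁₁ ∧ 1 ≤ c₁₂ ∧ 1 ≤ c₂₁ ∧ 1 ≤ c₂₂ ∧
        a₁ = c₁₁ * c₁₂ ∧ a₂ = c₂₁ * c₂₂ ∧ b₁ = c₁₁ * c₂₁ ∧ b₂ = c₁₂ * c₂₂ ∧ Q c₁₂ c₂₁)
    (hdir : ∀ x y : G, ∃ z : G, x ≤ z ∧ y ≤ z)
    (hQ1 : Q 1 1)
    {n₁ n₂ : A} {f₁ f₂ h₁ h₂ : A → G}
    (hf₁ : (Function.mulSupport f₁).Finite) (hf₂ : (Function.mulSupport f₂).Finite)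
    (hh₁ : (Function.mulSupport h₁).Finite) (hh₂ : (Function.mulSupport h₂).Finite)
    (hx₁ : wrLE (wrOne A G) (n₁, f₁)) (hx₂ : wrLE (wrOne A G) (n₂, f₂))
    (hy₁ : wrLE (wrOne A G) (n₁, h₁)) (hy₂ : wrLE (wrOne A G) (n₂, h₂))
    (hF : ∀ b, f₁ (b * n₁⁻¹) * f₂ b = h₁ (b * n₁⁻¹) * h₂ b) :
    ∃ k₁₁ v w k₂₂ : A → G,
      (Function.mulSupport k₁₁).Finite ∧ (Function.mulSupport v).Finite ∧
      (Function.mulSupport w).Finite ∧ (Function.mulSupport k₂₂).Finite ∧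
      wrLE (wrOne A G) (n₁, k₁₁) ∧ (∀ b, 1 ≤ v b) ∧ (∀ b, 1 ≤ w b) ∧
      wrLE (wrOne A G) (n₂, k₂₂) ∧
      (n₁, f₁) = wrMul (n₁, k₁₁) (1, v) ∧ (n₂, f₂) = wrMul (1, w) (n₂, k₂₂) ∧
      (n₁, h₁) = wrMul (n₁, k₁₁) (1, w) ∧ (n₂, h₂) = wrMul (1, v) (n₂, k₂₂) ∧
      ∀ b, Q (v b) (w b) := by
  have hpos₁ : n₁ = 1 → (∀ a, 1 ≤ f₁ a) ∧ (∀ a, 1 ≤ h₁ a) := by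
    intro h
    exact ⟨wrAux_snd_pos hx₁ h, wrAux_snd_pos hy₁ h⟩
  have hpos₂ : n₂ = 1 → (∀ a, 1 ≤ f₂ a) ∧ (∀ a, 1 ≤ h₂ a) := by
    intro h
    exact ⟨wrAux_snd_pos hx₂ h, wrAux_snd_pos hy₂ h⟩
  have key : ∀ b : A, ∃ u v w t : G,
      u * v = f₁ (b * n₁⁻¹) ∧ w * t = f₂ b ∧ u * w = h₁ (b * n₁⁻¹) ∧ v * t = h₂ b ∧
      1 ≤ v ∧ 1 ≤ w ∧ (n₁ = 1 → 1 ≤ u) ∧ (n₂ = 1 → 1 ≤ t) ∧ Q v w ∧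
      (f₁ (b * n₁⁻¹) = 1 → f₂ b = 1 → h₁ (b * n₁⁻¹) = 1 → h₂ b = 1 →
        u = 1 ∧ v = 1 ∧ w = 1 ∧ t = 1) := by
    intro b
    by_cases htriv : f₁ (b * n₁⁻¹) = 1 ∧ f₂ b = 1 ∧ h₁ (b * n₁⁻¹) = 1 ∧ h₂ b = 1
    · refine ⟨1, 1, 1, 1, ?_, ?_, ?_, ?_, le_rfl, le_rfl, fun _ => le_rfl, fun _ => le_rfl,
        hQ1, fun _ _ _ _ => ⟨rfl, rfl, rfl, rfl⟩⟩
      · rw [htriv.1, mul_one]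
      · rw [htriv.2.1, mul_one]
      · rw [htriv.2.2.1, mul_one]
      · rw [htriv.2.2.2, mul_one]
    · obtain ⟨s, hs1, hsf, hsh, hseq⟩ : ∃ s : G, 1 ≤ s ∧ 1 ≤ s * f₁ (b * n₁⁻¹) ∧
          1 ≤ s * h₁ (b * n₁⁻¹) ∧ (n₁ = 1 → s = 1) := by
        by_cases h1 : n₁ = 1
        · refine ⟨1, le_rfl, ?_, ?_, fun _ => rfl⟩
          · rw [one_mul]; exact (hpos₁ h1).1 _
          · rw [one_mul]; exact (hpos₁ h1).2 _
        · obtain ⟨s₀, hsa, hsb⟩ := hdir (f₁ (b * n₁⁻¹))⁻¹ (h₁ (b * n₁⁻¹))⁻¹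
          obtain ⟨s, hsc, hsd⟩ := hdir s₀ 1
          refine ⟨s, hsd, ?_, ?_, fun h => absurd h h1⟩
          · calc (1 : G) = (f₁ (b * n₁⁻¹))⁻¹ * f₁ (b * n₁⁻¹) := (inv_mul_cancel _).symm
              _ ≤ s * f₁ (b * n₁⁻¹) := mul_le_mul_left (hsa.trans hsc) _
          · calc (1 : G) = (h₁ (b * n₁⁻¹))⁻¹ * h₁ (b * n₁⁻¹) := (inv_mul_cancel _).symm
              _ ≤ s * h₁ (b * n₁⁻¹) := mul_le_mul_left (hsb.trans hsc) _
      obtain ⟨d, hd1, hdf, hdh, hdeq⟩ : ∃ d : G, 1 ≤ d ∧ 1 ≤ f₂ b * d ∧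
          1 ≤ h₂ b * d ∧ (n₂ = 1 → d = 1) := by
        by_cases h2 : n₂ = 1
        · refine ⟨1, le_rfl, ?_, ?_, fun _ => rfl⟩
          · rw [mul_one]; exact (hpos₂ h2).1 _
          · rw [mul_one]; exact (hpos₂ h2).2 _
        · obtain ⟨d₀, hda, hdb⟩ := hdir (f₂ b)⁻¹ (h₂ b)⁻¹
          obtain ⟨d, hdc, hdd⟩ := hdir d₀ 1
          refine ⟨d, hdd, ?_, ?_, fun h => absurd h h2⟩
          · calc (1 : G) = f₂ b * (f₂ b)⁻¹ := (mul_inv_cancel _).symm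
              _ ≤ f₂ b * d := mul_le_mul_right (hda.trans hdc) _
          · calc (1 : G) = h₂ b * (h₂ b)⁻¹ := (mul_inv_cancel _).symm
              _ ≤ h₂ b * d := mul_le_mul_right (hdb.trans hdc) _
      obtain ⟨c₁₁, c₁₂, c₂₁, c₂₂, p11, p12, p21, p22, e1, e2, e3, e4, hq⟩ :=
        hG (s * f₁ (b * n₁⁻¹)) (f₂ b * d) (s * h₁ (b * n₁⁻¹)) (h₂ b * d) hsf hdf hsh hdh
          (by rw [mul_assoc s (f₁ (b * n₁⁻¹)) (f₂ b * d), ← mul_assoc (f₁ (b * n₁⁻¹)),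
                hF b, mul_assoc (h₁ (b * n₁⁻¹)), ← mul_assoc s])
      refine ⟨s⁻¹ * c₁₁, c₁₂, c₂₁, c₂₂ * d⁻¹, ?_, ?_, ?_, ?_, p12, p21, ?_, ?_, hq,
        fun hf1 hf2 hh1' hh2' => absurd ⟨hf1, hf2, hh1', hh2'⟩ htriv⟩
      · rw [mul_assoc, ← e1, inv_mul_cancel_left]
      · rw [← mul_assoc, ← e2, mul_inv_cancel_right]
      · rw [mul_assoc, ← e3, inv_mul_cancel_left]
      · rw [← mul_assoc, ← e4, mul_inv_cancel_right]
      · intro h1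
        rw [hseq h1, inv_one, one_mul]
        exact p11
      · intro h2
        rw [hdeq h2, inv_one, mul_one]
        exact p22
  choose u v w t e1 e2 e3 e4 hv hw hu ht hQv htr using key
  -- the finite set outside of which everything is trivial
  have hT : (((fun x => x * n₁) '' Function.mulSupport f₁) ∪ Function.mulSupport f₂ ∪
      ((fun x => x * n₁) '' Function.mulSupport h₁) ∪ Function.mulSupport h₂).Finite :=
    (((hf₁.image _).union hf₂).union (hh₁.image _)).union hh₂
  set T := ((fun x => x * n₁) '' Function.mulSupport f₁) ∪ Function.mulSupport f₂ ∪
      ((fun x => x * n₁) '' Function.mulSupport h₁) ∪ Function.mulSupport h₂ with hTdef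
  have htriv' : ∀ b : A, b ∉ T → u b = 1 ∧ v b = 1 ∧ w b = 1 ∧ t b = 1 := by
    intro b hb
    apply htr b
    · by_contra h
      exact hb (Or.inl (Or.inl (Or.inl ⟨b * n₁⁻¹, h, by simp⟩)))
    · by_contra h
      exact hb (Or.inl (Or.inl (Or.inr h)))
    · by_contra h
      exact hb (Or.inl (Or.inr ⟨b * n₁⁻¹, h, by simp⟩))
    · by_contra h
      exact hb (Or.inr h)
  have hsub : ∀ (g : A → G), (∀ b : A, b ∉ T → g b = 1) →
      (Function.mulSupport g).Finite := by
    intro g hg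
    apply Set.Finite.subset hT
    intro b hb
    rw [Function.mem_mulSupport] at hb
    by_contra hbT
    exact hb (hg b hbT)
  refine ⟨fun a => u (a * n₁), v, w, t, ?_, hsub v (fun b hb => (htriv' b hb).2.1),
    hsub w (fun b hb => (htriv' b hb).2.2.1), hsub t (fun b hb => (htriv' b hb).2.2.2),
    ?_, hv, hw, ?_, ?_, ?_, ?_, ?_, hQv⟩
  · -- support of k₁₁
    apply Set.Finite.subset (hT.image (fun x => x * n₁⁻¹))
    intro a ha
    rw [Function.mem_mulSupport] at ha
    have : a * n₁ ∈ T := by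
      by_contra hc
      exact ha (htriv' _ hc).1
    exact ⟨a * n₁, this, by simp⟩
  · -- positivity of (n₁, k₁₁)
    rcases hx₁ with hlt | ⟨heq, -⟩
    · exact Or.inl hlt
    · exact Or.inr ⟨heq, fun a => hu (a * n₁) heq.symm⟩
  · -- positivity of (n₂, t)
    rcases hx₂ with hlt | ⟨heq, -⟩
    · exact Or.inl hlt
    · exact Or.inr ⟨heq, fun a => ht a heq.symm⟩
  · -- (n₁, f₁) = (n₁, k₁₁) * (1, v)
    refine Prod.ext (mul_one n₁).symm (funext fun a => ?_)
    show f₁ a = u (a * n₁) * v (a * n₁)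
    rw [e1 (a * n₁), mul_inv_cancel_right]
  · -- (n₂, f₂) = (1, w) * (n₂, t)
    refine Prod.ext (one_mul n₂).symm (funext fun a => ?_)
    show f₂ a = w a * t (a * 1)
    rw [mul_one, e2 a]
  · -- (n₁, h₁) = (n₁, k₁₁) * (1, w)
    refine Prod.ext (mul_one n₁).symm (funext fun a => ?_)
    show h₁ a = u (a * n₁) * w (a * n₁)
    rw [e3 (a * n₁), mul_inv_cancel_right]
  · -- (n₂, h₂) = (1, v) * (n₂, t)
    refine Prod.ext (one_mul n₂).symm (funext fun a => ?_)
    show h₂ a = v a * t (a * 1)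
    rw [mul_one, e4 a]

end WrConstr2
section WrGeneric

set_option linter.unusedSectionVars false
set_option maxHeartbeats 1000000

open Function

variable {A G : Type*} [Group A] [LinearOrder A]
    [CovariantClass A A (· * ·) (· ≤ ·)]
    [CovariantClass A A (Function.swap (· * ·)) (· ≤ ·)]
    [Group G] [PartialOrder G]
    [CovariantClass G G (· * ·) (· ≤ ·)]
    [CovariantClass G G (Function.swap (· * ·)) (· ≤ ·)]

theorem wrAux_backward (Q : G → G → Prop)
    (QW : (A × (A → G)) → (A × (A → G)) → Prop)
    (hdir : ∀ x y : G, ∃ z : G, x ≤ z ∧ y ≤ z)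
    (hG : ∀ a₁ a₂ b₁ b₂ : G, 1 ≤ a₁ → 1 ≤ a₂ → 1 ≤ b₁ → 1 ≤ b₂ → a₁ * a₂ = b₁ * b₂ →
      ∃ c₁₁ c₁₂ c₂₁ c₂₂ : G, 1 ≤ c₁₁ ∧ 1 ≤ c₁₂ ∧ 1 ≤ c₂₁ ∧ 1 ≤ c₂₂ ∧
        a₁ = c₁₁ * c₁₂ ∧ a₂ = c₂₁ * c₂₂ ∧ b₁ = c₁₁ * c₂₁ ∧ b₂ = c₁₂ * c₂₂ ∧ Q c₁₂ c₂₁)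
    (hQ1 : Q 1 1)
    (hQWr : ∀ c : A × (A → G), QW c (wrOne A G))
    (hQWl : ∀ c : A × (A → G), QW (wrOne A G) c)
    (hQWp : ∀ v w : A → G, (∀ b, Q (v b) (w b)) → QW (1, v) (1, w)) :
    ∀ a₁ a₂ b₁ b₂ : A × (A → G), a₁ ∈ wrS A G → a₂ ∈ wrS A G → b₁ ∈ wrS A G →
      b₂ ∈ wrS A G → wrLE (wrOne A G) a₁ → wrLE (wrOne A G) a₂ → wrLE (wrOne A G) b₁ →
      wrLE (wrOne A G) b₂ → wrMul a₁ a₂ = wrMul b₁ b₂ →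
      ∃ c₁₁ c₁₂ c₂₁ c₂₂ : A × (A → G),
        c₁₁ ∈ wrS A G ∧ c₁₂ ∈ wrS A G ∧ c₂₁ ∈ wrS A G ∧ c₂₂ ∈ wrS A G ∧
        wrLE (wrOne A G) c₁₁ ∧ wrLE (wrOne A G) c₁₂ ∧ wrLE (wrOne A G) c₂₁ ∧
        wrLE (wrOne A G) c₂₂ ∧
        a₁ = wrMul c₁₁ c₁₂ ∧ a₂ = wrMul c₂₁ c₂₂ ∧ b₁ = wrMul c₁₁ c₂₁ ∧
        b₂ = wrMul c₁₂ c₂₂ ∧ QW c₁₂ c₂₁ := by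
  rintro ⟨n₁, f₁⟩ ⟨n₂, f₂⟩ ⟨m₁, h₁⟩ ⟨m₂, h₂⟩ hS1 hS2 hS3 hS4 hp1 hp2 hp3 hp4 hE
  rcases lt_trichotomy m₁ n₁ with hlt | heq | hgt
  · obtain ⟨c₁₁, c₁₂, c₂₂, m1, m2, m3, p1, p2, p3, q1, q2, q3, q4⟩ :=
      wrAux_constr_lt hS1 hS2 hS3 hlt hp2 hp3 hE
    exact ⟨c₁₁, c₁₂, wrOne A G, c₂₂, m1, m2, wrAux_one_mem, m3, p1, p2,
      wrAux_le_refl _, p3, q1, q2, q3, q4, hQWr _⟩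
  · -- m₁ = n₁
    subst heq
    have hA : m₁ * n₂ = m₁ * m₂ := congrArg Prod.fst hE
    have hm : n₂ = m₂ := mul_left_cancel hA
    subst hm
    have hF : ∀ b, f₁ (b * m₁⁻¹) * f₂ b = h₁ (b * m₁⁻¹) * h₂ b := by
      intro b
      have := congrFun (congrArg Prod.snd hE) (b * m₁⁻¹)
      simpa [wrMul, inv_mul_cancel_right] using this
    obtain ⟨k₁₁, v, w, k₂₂, s1, s2, s3, s4, p1, p2, p3, p4, q1, q2, q3, q4, hQv⟩ :=
      wrAux_constr_eq Q hG hdir hQ1 hS1 hS2 hS3 hS4 hp1 hp2 hp3 hp4 hF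
    exact ⟨(m₁, k₁₁), (1, v), (1, w), (n₂, k₂₂), s1, s2, s3, s4, p1,
      Or.inr ⟨rfl, p2⟩, Or.inr ⟨rfl, p3⟩, p4, q1, q2, q3, q4, hQWp v w hQv⟩
  · obtain ⟨c₁₁, c₁₂, c₂₂, m1, m2, m3, p1, p2, p3, q1, q2, q3, q4⟩ :=
      wrAux_constr_lt hS3 hS4 hS1 hgt hp4 hp1 hE.symm
    exact ⟨c₁₁, wrOne A G, c₁₂, c₂₂, m1, wrAux_one_mem, m2, m3, p1,
      wrAux_le_refl _, p2, p3, q3, q4, q1, q2, hQWl _⟩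

theorem wrAux_forward (Q : G → G → Prop)
    (QW : (A × (A → G)) → (A × (A → G)) → Prop)
    (hW : ∀ a₁ a₂ b₁ b₂ : A × (A → G), a₁ ∈ wrS A G → a₂ ∈ wrS A G → b₁ ∈ wrS A G →
      b₂ ∈ wrS A G → wrLE (wrOne A G) a₁ → wrLE (wrOne A G) a₂ → wrLE (wrOne A G) b₁ →
      wrLE (wrOne A G) b₂ → wrMul a₁ a₂ = wrMul b₁ b₂ →
      ∃ c₁₁ c₁₂ c₂₁ c₂₂ : A × (A → G),
        c₁₁ ∈ wrS A G ∧ c₁₂ ∈ wrS A G ∧ c₂₁ ∈ wrS A G ∧ c₂₂ ∈ wrS A G ∧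
        wrLE (wrOne A G) c₁₁ ∧ wrLE (wrOne A G) c₁₂ ∧ wrLE (wrOne A G) c₂₁ ∧
        wrLE (wrOne A G) c₂₂ ∧
        a₁ = wrMul c₁₁ c₁₂ ∧ a₂ = wrMul c₂₁ c₂₂ ∧ b₁ = wrMul c₁₁ c₂₁ ∧
        b₂ = wrMul c₁₂ c₂₂ ∧ QW c₁₂ c₂₁)
    (hQWtoQ : ∀ P R : A × (A → G), P.1 = 1 → R.1 = 1 → (∀ a, 1 ≤ P.2 a) →
      (∀ a, 1 ≤ R.2 a) → QW P R → Q (P.2 1) (R.2 1)) :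
    ∀ a₁ a₂ b₁ b₂ : G, 1 ≤ a₁ → 1 ≤ a₂ → 1 ≤ b₁ → 1 ≤ b₂ → a₁ * a₂ = b₁ * b₂ →
      ∃ c₁₁ c₁₂ c₂₁ c₂₂ : G, 1 ≤ c₁₁ ∧ 1 ≤ c₁₂ ∧ 1 ≤ c₂₁ ∧ 1 ≤ c₂₂ ∧
        a₁ = c₁₁ * c₁₂ ∧ a₂ = c₂₁ * c₂₂ ∧ b₁ = c₁₁ * c₂₁ ∧ b₂ = c₁₂ * c₂₂ ∧
        Q c₁₂ c₂₁ := by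
  intro a₁ a₂ b₁ b₂ h1 h2 h3 h4 hE
  obtain ⟨C₁₁, C₁₂, C₂₁, C₂₂, m1, m2, m3, m4, p1, p2, p3, p4, q1, q2, q3, q4, hqw⟩ :=
    hW (wrDelta A a₁) (wrDelta A a₂) (wrDelta A b₁) (wrDelta A b₂)
      (wrDelta_mem _) (wrDelta_mem _) (wrDelta_mem _) (wrDelta_mem _)
      (wrDelta_pos h1) (wrDelta_pos h2) (wrDelta_pos h3) (wrDelta_pos h4)
      (by rw [wrDelta_mul, wrDelta_mul, hE])
  -- first components are all 1
  have hfst1 : (1 : A) = C₁₁.1 * C₁₂.1 := congrArg Prod.fst q1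
  have hfst2 : (1 : A) = C₂₁.1 * C₂₂.1 := congrArg Prod.fst q2
  have key : ∀ P R : A × (A → G), wrLE (wrOne A G) P → wrLE (wrOne A G) R →
      (1 : A) = P.1 * R.1 → P.1 = 1 ∧ R.1 = 1 := by
    intro P R hP hR h
    have l1 := wrAux_one_le_fst hP
    have l2 := wrAux_one_le_fst hR
    constructor
    · refine le_antisymm ?_ l1
      calc P.1 ≤ P.1 * R.1 := le_mul_of_one_le_right' l2
        _ = 1 := h.symm
    · refine le_antisymm ?_ l2
      calc R.1 ≤ P.1 * R.1 := le_mul_of_one_le_left' l1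
        _ = 1 := h.symm
  obtain ⟨e11, e12⟩ := key _ _ p1 p2 hfst1
  obtain ⟨e21, e22⟩ := key _ _ p3 p4 hfst2
  have pos11 := wrAux_snd_pos p1 e11
  have pos12 := wrAux_snd_pos p2 e12
  have pos21 := wrAux_snd_pos p3 e21
  have pos22 := wrAux_snd_pos p4 e22
  refine ⟨C₁₁.2 1, C₁₂.2 1, C₂₁.2 1, C₂₂.2 1, pos11 1, pos12 1, pos21 1, pos22 1,
    ?_, ?_, ?_, ?_, hQWtoQ _ _ e12 e21 pos12 pos21 hqw⟩
  · have := congrFun (congrArg Prod.snd q1) 1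
    simpa [wrDelta, wrMul, e11] using this
  · have := congrFun (congrArg Prod.snd q2) 1
    simpa [wrDelta, wrMul, e21] using this
  · have := congrFun (congrArg Prod.snd q3) 1
    simpa [wrDelta, wrMul, e11] using this
  · have := congrFun (congrArg Prod.snd q4) 1
    simpa [wrDelta, wrMul, e12] using this

end WrGeneric
section WrFinal

set_option linter.unusedSectionVars false
set_option maxHeartbeats 1000000

open Function

variable {A G : Type*} [Group A] [LinearOrder A]
    [CovariantClass A A (· * ·) (· ≤ ·)]
    [CovariantClass A A (Function.swap (· * ·)) (· ≤ ·)]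
    [Group G] [PartialOrder G]
    [CovariantClass G G (· * ·) (· ≤ ·)]
    [CovariantClass G G (Function.swap (· * ·)) (· ≤ ·)]

theorem wrAux_delta_le {P : A × (A → G)} {x : G} (hP1 : P.1 = 1)
    (hpos : ∀ a, 1 ≤ P.2 a) (hx : x ≤ P.2 1) : wrLE (wrDelta A x) P := by
  refine Or.inr ⟨hP1.symm, fun a => ?_⟩
  show (if a = 1 then x else 1) ≤ P.2 a
  by_cases ha : a = 1
  · rw [if_pos ha, ha]; exact hx
  · rw [if_neg ha]; exact hpos a

-- RDP1-style predicates
theorem wrAux_Q1_one : ∀ x y : G, 1 ≤ x → x ≤ 1 → 1 ≤ y → y ≤ 1 → x * y = y * x := by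
  intro x y hx hx' hy hy'
  rw [le_antisymm hx' hx, le_antisymm hy' hy]

theorem wrAux_QW1_r (c : A × (A → G)) :
    ∀ x y : A × (A → G), x ∈ wrS A G → y ∈ wrS A G → wrLE (wrOne A G) x → wrLE x c →
      wrLE (wrOne A G) y → wrLE y (wrOne A G) → wrMul x y = wrMul y x := by
  intro x y _ _ _ _ py ly
  rw [wrAux_le_antisymm ly py, wrAux_mul_one, wrAux_one_mul]

theorem wrAux_QW1_l (c : A × (A → G)) :
    ∀ x y : A × (A → G), x ∈ wrS A G → y ∈ wrS A G → wrLE (wrOne A G) x →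
      wrLE x (wrOne A G) → wrLE (wrOne A G) y → wrLE y c → wrMul x y = wrMul y x := by
  intro x y _ _ px lx _ _
  rw [wrAux_le_antisymm lx px, wrAux_mul_one, wrAux_one_mul]

theorem wrAux_fst_one_of_pos_le {X : A × (A → G)} {v : A → G}
    (pX : wrLE (wrOne A G) X) (lX : wrLE X (1, v)) :
    X.1 = 1 ∧ ∀ a, X.2 a ≤ v a := by
  rcases lX with hlt | ⟨h1, h2⟩
  · exact absurd hlt (not_lt.mpr (wrAux_one_le_fst pX))
  · exact ⟨h1, h2⟩

theorem wrAux_QW1_p (v w : A → G)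
    (hvw : ∀ b, ∀ x y : G, 1 ≤ x → x ≤ v b → 1 ≤ y → y ≤ w b → x * y = y * x) :
    ∀ x y : A × (A → G), x ∈ wrS A G → y ∈ wrS A G → wrLE (wrOne A G) x →
      wrLE x (1, v) → wrLE (wrOne A G) y → wrLE y (1, w) → wrMul x y = wrMul y x := by
  intro X Y _ _ pX lX pY lY
  obtain ⟨hX1, hXv⟩ := wrAux_fst_one_of_pos_le pX lX
  obtain ⟨hY1, hYw⟩ := wrAux_fst_one_of_pos_le pY lY
  have posX := wrAux_snd_pos pX hX1
  have posY := wrAux_snd_pos pY hY1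
  refine Prod.ext ?_ (funext fun a => ?_)
  · show X.1 * Y.1 = Y.1 * X.1
    rw [hX1, hY1]
  · show X.2 a * Y.2 (a * X.1) = Y.2 a * X.2 (a * Y.1)
    rw [hX1, hY1, mul_one]
    exact hvw a (X.2 a) (Y.2 a) (posX a) (hXv a) (posY a) (hYw a)

theorem wrAux_QW1_to_Q1 (P R : A × (A → G)) (hP1 : P.1 = 1) (hR1 : R.1 = 1)
    (pP : ∀ a, 1 ≤ P.2 a) (pR : ∀ a, 1 ≤ R.2 a)
    (hqw : ∀ x y : A × (A → G), x ∈ wrS A G → y ∈ wrS A G → wrLE (wrOne A G) x →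
      wrLE x P → wrLE (wrOne A G) y → wrLE y R → wrMul x y = wrMul y x) :
    ∀ x y : G, 1 ≤ x → x ≤ P.2 1 → 1 ≤ y → y ≤ R.2 1 → x * y = y * x := by
  intro x y hx hxl hy hyl
  have h := hqw (wrDelta A x) (wrDelta A y) (wrDelta_mem _) (wrDelta_mem _)
    (wrDelta_pos hx) (wrAux_delta_le hP1 pP hxl)
    (wrDelta_pos hy) (wrAux_delta_le hR1 pR hyl)
  rw [wrDelta_mul, wrDelta_mul] at h
  have h2 := congrArg (fun p : A × (A → G) => p.2 1) h
  simpa [wrDelta_snd_one] using h2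

-- RDP2-style predicates
theorem wrAux_QW2_p (v w : A → G)
    (hvw : ∀ b, ∀ z : G, z ≤ v b → z ≤ w b → z ≤ 1) :
    ∀ z : A × (A → G), z ∈ wrS A G → wrLE z (1, v) → wrLE z (1, w) →
      wrLE z (wrOne A G) := by
  intro Z _ l1 l2
  rcases l1 with hlt | ⟨hz1, hzv⟩
  · exact Or.inl hlt
  · rcases l2 with hlt' | ⟨-, hzw⟩
    · exact Or.inl hlt'
    · exact Or.inr ⟨hz1, fun a => hvw a (Z.2 a) (hzv a) (hzw a)⟩

theorem wrAux_QW2_to_Q2 (P R : A × (A → G)) (hP1 : P.1 = 1) (hR1 : R.1 = 1)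
    (pP : ∀ a, 1 ≤ P.2 a) (pR : ∀ a, 1 ≤ R.2 a)
    (hqw : ∀ z : A × (A → G), z ∈ wrS A G → wrLE z P → wrLE z R →
      wrLE z (wrOne A G)) :
    ∀ z : G, z ≤ P.2 1 → z ≤ R.2 1 → z ≤ 1 := by
  intro z hzl hzr
  have h := hqw (wrDelta A z) (wrDelta_mem _)
    (wrAux_delta_le hP1 pP hzl) (wrAux_delta_le hR1 pR hzr)
  rcases h with hlt | ⟨-, hp⟩
  · simp [wrDelta, wrOne] at hlt
  · simpa [wrDelta_snd_one, wrOne] using hp 1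

end WrFinal

/-- For a linearly ordered group `A` and a directed po-group `G`,
the restricted Wreath product `A wr G` satisfies RDP (resp. RDP₁, resp. RDP₂)
iff `G` satisfies RDP (resp. RDP₁, resp. RDP₂). -/
theorem restricted_wreath_rdp_iff {A G : Type*} [Group A] [LinearOrder A]
    [CovariantClass A A (· * ·) (· ≤ ·)]
    [CovariantClass A A (Function.swap (· * ·)) (· ≤ ·)]
    [Group G] [PartialOrder G]
    [CovariantClass G G (· * ·) (· ≤ ·)]
    [CovariantClass G G (Function.swap (· * ·)) (· ≤ ·)]
    (hdir : ∀ x y : G, ∃ z : G, x ≤ z ∧ y ≤ z) :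
    (RDPWithOn (wrS A G) (fun p q : A × (A → G) => wrMul p q) (wrOne A G) wrLE ↔
      RDPWith (fun a b : G => a * b) 1 (· ≤ ·)) ∧
    (RDP1WithOn (wrS A G) (fun p q : A × (A → G) => wrMul p q) (wrOne A G) wrLE ↔
      RDP1With (fun a b : G => a * b) 1 (· ≤ ·)) ∧
    (RDP2WithOn (wrS A G) (fun p q : A × (A → G) => wrMul p q) (wrOne A G) wrLE ↔
      RDP2With (fun a b : G => a * b) 1 (· ≤ ·)) := by
  refine ⟨⟨?_, ?_⟩, ⟨?_, ?_⟩, ⟨?_, ?_⟩⟩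
  · -- RDP, forward
    intro h a₁ a₂ b₁ b₂ h1 h2 h3 h4 hE
    obtain ⟨c₁₁, c₁₂, c₂₁, c₂₂, p1, p2, p3, p4, q1, q2, q3, q4, -⟩ :=
      wrAux_forward (fun _ _ => True) (fun _ _ => True)
        (fun A1 A2 B1 B2 m1 m2 m3 m4 l1 l2 l3 l4 he => by
          obtain ⟨C₁₁, C₁₂, C₂₁, C₂₂, m1', m2', m3', m4', l1', l2', l3', l4',
            e1, e2, e3, e4⟩ := h A1 A2 B1 B2 m1 m2 m3 m4 l1 l2 l3 l4 he
          exact ⟨C₁₁, C₁₂, C₂₁, C₂₂, m1', m2', m3', m4', l1', l2', l3', l4',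
            e1, e2, e3, e4, trivial⟩)
        (fun _ _ _ _ _ _ _ => trivial) a₁ a₂ b₁ b₂ h1 h2 h3 h4 hE
    exact ⟨c₁₁, c₁₂, c₂₁, c₂₂, p1, p2, p3, p4, q1, q2, q3, q4⟩
  · -- RDP, backward
    intro h a₁ a₂ b₁ b₂ m1 m2 m3 m4 l1 l2 l3 l4 hE
    obtain ⟨c₁₁, c₁₂, c₂₁, c₂₂, s1, s2, s3, s4, p1, p2, p3, p4, q1, q2, q3, q4, -⟩ :=
      wrAux_backward (fun _ _ => True) (fun _ _ => True) hdir
        (fun x₁ x₂ y₁ y₂ k1 k2 k3 k4 ke => by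
          obtain ⟨C₁₁, C₁₂, C₂₁, C₂₂, l1', l2', l3', l4', e1, e2, e3, e4⟩ :=
            h x₁ x₂ y₁ y₂ k1 k2 k3 k4 ke
          exact ⟨C₁₁, C₁₂, C₂₁, C₂₂, l1', l2', l3', l4', e1, e2, e3, e4, trivial⟩)
        trivial (fun _ => trivial) (fun _ => trivial) (fun _ _ _ => trivial)
        a₁ a₂ b₁ b₂ m1 m2 m3 m4 l1 l2 l3 l4 hE
    exact ⟨c₁₁, c₁₂, c₂₁, c₂₂, s1, s2, s3, s4, p1, p2, p3, p4, q1, q2, q3, q4⟩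
  · -- RDP1, forward
    intro h
    exact wrAux_forward
      (fun c₁₂ c₂₁ => ∀ x y : G, 1 ≤ x → x ≤ c₁₂ → 1 ≤ y → y ≤ c₂₁ → x * y = y * x)
      (fun P R => ∀ x y : A × (A → G), x ∈ wrS A G → y ∈ wrS A G →
        wrLE (wrOne A G) x → wrLE x P → wrLE (wrOne A G) y → wrLE y R →
        wrMul x y = wrMul y x)
      h wrAux_QW1_to_Q1
  · -- RDP1, backward
    intro h
    exact wrAux_backward
      (fun c₁₂ c₂₁ => ∀ x y : G, 1 ≤ x → x ≤ c₁₂ → 1 ≤ y → y ≤ c₂₁ → x * y = y * x)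
      (fun P R => ∀ x y : A × (A → G), x ∈ wrS A G → y ∈ wrS A G →
        wrLE (wrOne A G) x → wrLE x P → wrLE (wrOne A G) y → wrLE y R →
        wrMul x y = wrMul y x)
      hdir h wrAux_Q1_one wrAux_QW1_r wrAux_QW1_l wrAux_QW1_p
  · -- RDP2, forward
    intro h
    exact wrAux_forward
      (fun c₁₂ c₂₁ => ∀ z : G, z ≤ c₁₂ → z ≤ c₂₁ → z ≤ 1)
      (fun P R => ∀ z : A × (A → G), z ∈ wrS A G → wrLE z P → wrLE z R →
        wrLE z (wrOne A G))
      h wrAux_QW2_to_Q2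
  · -- RDP2, backward
    intro h
    exact wrAux_backward
      (fun c₁₂ c₂₁ => ∀ z : G, z ≤ c₁₂ → z ≤ c₂₁ → z ≤ 1)
      (fun P R => ∀ z : A × (A → G), z ∈ wrS A G → wrLE z P → wrLE z R →
        wrLE z (wrOne A G))
      hdir h (fun _ h _ => h) (fun _ _ _ _ h => h) (fun _ _ _ h _ => h) wrAux_QW2_p
end

section
/- Let G be a directed po-group. If the right wreath product ℤ ⃗wr G (respectively the left wreath product ℤ ⃖wr G) satisfies RDP, then G satisfies RDP. -/
section ZwrAux

set_option linter.unusedSectionVars false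

variable {G : Type*} [Group G] [PartialOrder G]
  [CovariantClass G G (· * ·) (· ≤ ·)]
  [CovariantClass G G (Function.swap (· * ·)) (· ≤ ·)]

/-- Embedding of `G` at index `0` of the wreath product. -/
def zwrEmb (g : G) : ℤ × (ℤ → G) := (0, fun i => if i = 0 then g else 1)

lemma zwrEmb_mem (g : G) : zwrEmb g ∈ zwrS G := by
  have h : Function.mulSupport (zwrEmb g).2 ⊆ {(0 : ℤ)} := by
    intro i hi
    rcases eq_or_ne i 0 with h | h
    · exact h
    · exact absurd (if_neg h) hi
  exact (Set.finite_singleton (0 : ℤ)).subset h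

lemma zwrEmb_mul (g h : G) : zwrMul (zwrEmb g) (zwrEmb h) = zwrEmb (g * h) := by
  unfold zwrMul zwrEmb
  refine Prod.ext (by simp) ?_
  funext i
  by_cases hi : i = 0 <;> simp [hi]

lemma zwr_one_inv_mul (p : ℤ × (ℤ → G)) : zwrMul (zwrInv (zwrOne G)) p = p := by
  unfold zwrMul zwrInv zwrOne
  refine Prod.ext (by simp) ?_
  funext i
  simp

lemma one_rLE_iff (p : ℤ × (ℤ → G)) :
    rLE (zwrOne G) p ↔ (zwrOne G = p ∨ rPos p) := by
  unfold rLE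
  rw [zwr_one_inv_mul]

lemma one_lLE_iff (p : ℤ × (ℤ → G)) :
    lLE (zwrOne G) p ↔ (zwrOne G = p ∨ lPos p) := by
  unfold lLE
  rw [zwr_one_inv_mul]

lemma rLE_fst {p : ℤ × (ℤ → G)} (h : rLE (zwrOne G) p) : 0 ≤ p.1 := by
  rcases (one_rLE_iff p).mp h with h | h
  · rw [← h]; exact le_refl 0
  · rcases h with h | ⟨h, -⟩ <;> omega

lemma lLE_fst {p : ℤ × (ℤ → G)} (h : lLE (zwrOne G) p) : 0 ≤ p.1 := by
  rcases (one_lLE_iff p).mp h with h | h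
  · rw [← h]; exact le_refl 0
  · rcases h with h | ⟨h, -⟩ <;> omega

lemma zwrEmb_one : zwrEmb (1 : G) = zwrOne G := by
  unfold zwrEmb zwrOne
  refine Prod.ext rfl ?_
  funext i
  by_cases hi : i = 0 <;> simp [hi]

lemma zwrEmb_pos_r {g : G} (hg : 1 ≤ g) : rLE (zwrOne G) (zwrEmb g) := by
  rcases eq_or_lt_of_le hg with h | h
  · rw [one_rLE_iff]; left; rw [← h, zwrEmb_one]
  · rw [one_rLE_iff]; right
    refine Or.inr ⟨rfl, 0, ?_, fun i hi => if_neg (by omega)⟩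
    simpa [zwrEmb] using h

lemma zwrEmb_pos_l {g : G} (hg : 1 ≤ g) : lLE (zwrOne G) (zwrEmb g) := by
  rcases eq_or_lt_of_le hg with h | h
  · rw [one_lLE_iff]; left; rw [← h, zwrEmb_one]
  · rw [one_lLE_iff]; right
    refine Or.inr ⟨rfl, 0, ?_, fun i hi => if_neg (by omega)⟩
    simpa [zwrEmb] using h

lemma r_cases {p : ℤ × (ℤ → G)} (hp1 : p.1 = 0) (h : rLE (zwrOne G) p) :
    (∀ i, p.2 i = 1) ∨ ∃ j, 1 < p.2 j ∧ ∀ i, j < i → p.2 i = 1 := by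
  rcases (one_rLE_iff p).mp h with h | h
  · left; intro i; rw [← h]; rfl
  · rcases h with h | ⟨-, h⟩
    · omega
    · exact Or.inr h

lemma l_cases {p : ℤ × (ℤ → G)} (hp1 : p.1 = 0) (h : lLE (zwrOne G) p) :
    (∀ i, p.2 i = 1) ∨ ∃ j, 1 < p.2 j ∧ ∀ i, i < j → p.2 i = 1 := by
  rcases (one_lLE_iff p).mp h with h | h
  · left; intro i; rw [← h]; rfl
  · rcases h with h | ⟨-, h⟩
    · omega
    · exact Or.inr h

/-- Key extraction lemma, right order: if `p`, `q` are positive, lie in the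
`n = 0` fibre, and their functions are pointwise inverse off `0`, then the
value of `p` at `0` is positive in `G`. -/
lemma key_r {p q : ℤ × (ℤ → G)} (hp1 : p.1 = 0) (hq1 : q.1 = 0)
    (hps : p ∈ zwrS G)
    (hp : rLE (zwrOne G) p) (hq : rLE (zwrOne G) q)
    (hpq : ∀ i : ℤ, i ≠ 0 → p.2 i * q.2 i = 1) : 1 ≤ p.2 0 := by
  have htop : ∀ j : ℤ, 0 < j → p.2 j = 1 := by
    by_contra hcon
    push_neg at hcon
    obtain ⟨j0, hj0, hj0ne⟩ := hcon
    have hSfin : {j : ℤ | 0 < j ∧ p.2 j ≠ 1}.Finite :=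
      hps.subset (fun j hj => hj.2)
    obtain ⟨J, hJS, hJmax⟩ := hSfin.exists_maximalFor id _ ⟨j0, hj0, hj0ne⟩
    have hmax : ∀ i : ℤ, 0 < i → p.2 i ≠ 1 → i ≤ J := by
      intro i h1 h2
      by_contra hlt
      push_neg at hlt
      have := @hJmax i ⟨h1, h2⟩ (by simpa using hlt.le)
      simp only [id] at this
      omega
    have hJpos : 0 < J := hJS.1
    have htopJ : ∀ i, J < i → p.2 i = 1 := by
      intro i hi
      by_contra h'
      exact absurd (hmax i (by omega) h') (by omega)
    rcases r_cases hp1 hp with hall | ⟨j, hj1, hjall⟩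
    · exact hJS.2 (hall J)
    have hjJ : j = J := by
      rcases lt_trichotomy j J with hlt | heq | hgt
      · exact absurd (hjall J hlt) hJS.2
      · exact heq
      · rw [htopJ j hgt] at hj1; exact absurd hj1 (lt_irrefl 1)
    rw [hjJ] at hj1
    have hqJ : q.2 J = (p.2 J)⁻¹ :=
      eq_inv_of_mul_eq_one_right (hpq J (by omega))
    have hqtop : ∀ i, J < i → q.2 i = 1 := by
      intro i hi
      have h0 : i ≠ 0 := by omega
      have := hpq i h0
      rw [htopJ i hi, one_mul] at this
      exact this
    rcases r_cases hq1 hq with hall | ⟨k, hk1, hkall⟩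
    · have := hall J
      rw [hqJ, inv_eq_one] at this
      exact hJS.2 this
    have hkJ : k = J := by
      rcases lt_trichotomy k J with hlt | heq | hgt
      · have := hkall J hlt
        rw [hqJ, inv_eq_one] at this
        exact absurd this hJS.2
      · exact heq
      · rw [hqtop k hgt] at hk1; exact absurd hk1 (lt_irrefl 1)
    rw [hkJ, hqJ] at hk1
    exact absurd hk1 (show (p.2 J)⁻¹ ≤ 1 from Left.inv_le_one_iff.mpr hj1.le).not_gt
  rcases r_cases hp1 hp with hall | ⟨j, hj1, hjall⟩
  · exact (hall 0).ge
  rcases lt_trichotomy j 0 with hlt | heq | hgt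
  · exact (hjall 0 hlt).ge
  · exact (heq ▸ hj1).le
  · rw [htop j hgt] at hj1; exact absurd hj1 (lt_irrefl 1)

/-- Key extraction lemma, left order. -/
lemma key_l {p q : ℤ × (ℤ → G)} (hp1 : p.1 = 0) (hq1 : q.1 = 0)
    (hps : p ∈ zwrS G)
    (hp : lLE (zwrOne G) p) (hq : lLE (zwrOne G) q)
    (hpq : ∀ i : ℤ, i ≠ 0 → p.2 i * q.2 i = 1) : 1 ≤ p.2 0 := by
  have htop : ∀ j : ℤ, j < 0 → p.2 j = 1 := by
    by_contra hcon
    push_neg at hcon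
    obtain ⟨j0, hj0, hj0ne⟩ := hcon
    have hSfin : {j : ℤ | j < 0 ∧ p.2 j ≠ 1}.Finite :=
      hps.subset (fun j hj => hj.2)
    obtain ⟨J, hJS, hJmin⟩ := hSfin.exists_minimalFor id _ ⟨j0, hj0, hj0ne⟩
    have hmin : ∀ i : ℤ, i < 0 → p.2 i ≠ 1 → J ≤ i := by
      intro i h1 h2
      by_contra hlt
      push_neg at hlt
      have := @hJmin i ⟨h1, h2⟩ (by simpa using hlt.le)
      simp only [id] at this
      omega
    have hJneg : J < 0 := hJS.1
    have htopJ : ∀ i, i < J → p.2 i = 1 := by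
      intro i hi
      by_contra h'
      exact absurd (hmin i (by omega) h') (by omega)
    rcases l_cases hp1 hp with hall | ⟨j, hj1, hjall⟩
    · exact hJS.2 (hall J)
    have hjJ : j = J := by
      rcases lt_trichotomy j J with hlt | heq | hgt
      · rw [htopJ j hlt] at hj1; exact absurd hj1 (lt_irrefl 1)
      · exact heq
      · exact absurd (hjall J hgt) hJS.2
    rw [hjJ] at hj1
    have hqJ : q.2 J = (p.2 J)⁻¹ :=
      eq_inv_of_mul_eq_one_right (hpq J (by omega))
    have hqtop : ∀ i, i < J → q.2 i = 1 := by
      intro i hi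
      have h0 : i ≠ 0 := by omega
      have := hpq i h0
      rw [htopJ i hi, one_mul] at this
      exact this
    rcases l_cases hq1 hq with hall | ⟨k, hk1, hkall⟩
    · have := hall J
      rw [hqJ, inv_eq_one] at this
      exact hJS.2 this
    have hkJ : k = J := by
      rcases lt_trichotomy k J with hlt | heq | hgt
      · rw [hqtop k hlt] at hk1; exact absurd hk1 (lt_irrefl 1)
      · exact heq
      · have := hkall J hgt
        rw [hqJ, inv_eq_one] at this
        exact absurd this hJS.2
    rw [hkJ, hqJ] at hk1
    exact absurd hk1 (show (p.2 J)⁻¹ ≤ 1 from Left.inv_le_one_iff.mpr hj1.le).not_gt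
  rcases l_cases hp1 hp with hall | ⟨j, hj1, hjall⟩
  · exact (hall 0).ge
  rcases lt_trichotomy j 0 with hlt | heq | hgt
  · rw [htop j hlt] at hj1; exact absurd hj1 (lt_irrefl 1)
  · exact (heq ▸ hj1).le
  · exact (hjall 0 hgt).ge

/-- Generic assembly: any compatible order on the wreath product for which
the key extraction lemma holds transfers RDP down to `G`. -/
lemma rdp_main_aux {le : (ℤ × (ℤ → G)) → (ℤ × (ℤ → G)) → Prop}
    (hfst : ∀ p : ℤ × (ℤ → G), le (zwrOne G) p → 0 ≤ p.1)
    (hemb : ∀ g : G, 1 ≤ g → le (zwrOne G) (zwrEmb g))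
    (hkey : ∀ p q : ℤ × (ℤ → G), p.1 = 0 → q.1 = 0 → p ∈ zwrS G →
      le (zwrOne G) p → le (zwrOne G) q →
      (∀ i : ℤ, i ≠ 0 → p.2 i * q.2 i = 1) → 1 ≤ p.2 0)
    (hR : RDPWithOn (zwrS G) (fun p q : ℤ × (ℤ → G) => zwrMul p q) (zwrOne G) le) :
    RDPWith (fun a b : G => a * b) 1 (· ≤ ·) := by
  intro a₁ a₂ b₁ b₂ ha₁ ha₂ hb₁ hb₂ hab
  obtain ⟨c₁₁, c₁₂, c₂₁, c₂₂, m11, m12, m21, m22, p11, p12, p21, p22, e1, e2, e3, e4⟩ :=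
    hR (zwrEmb a₁) (zwrEmb a₂) (zwrEmb b₁) (zwrEmb b₂)
      (zwrEmb_mem _) (zwrEmb_mem _) (zwrEmb_mem _) (zwrEmb_mem _)
      (hemb _ ha₁) (hemb _ ha₂) (hemb _ hb₁) (hemb _ hb₂)
      (by
        show zwrMul (zwrEmb a₁) (zwrEmb a₂) = zwrMul (zwrEmb b₁) (zwrEmb b₂)
        rw [zwrEmb_mul, zwrEmb_mul]
        exact congrArg zwrEmb hab)
  have f1 : c₁₁.1 + c₁₂.1 = 0 := by
    simpa [zwrEmb, zwrMul] using (congrArg Prod.fst e1).symm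
  have f2 : c₂₁.1 + c₂₂.1 = 0 := by
    simpa [zwrEmb, zwrMul] using (congrArg Prod.fst e2).symm
  have g1 := hfst _ p11
  have g2 := hfst _ p12
  have g3 := hfst _ p21
  have g4 := hfst _ p22
  have h11 : c₁₁.1 = 0 := by omega
  have h12 : c₁₂.1 = 0 := by omega
  have h21 : c₂₁.1 = 0 := by omega
  have h22 : c₂₂.1 = 0 := by omega
  have q1 : ∀ i : ℤ, i ≠ 0 → c₁₁.2 i * c₁₂.2 i = 1 := by
    intro i hi
    have h := congrFun (congrArg Prod.snd e1) i
    simp only [zwrEmb, zwrMul, h11, add_zero, if_neg hi] at h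
    exact h.symm
  have q2 : ∀ i : ℤ, i ≠ 0 → c₂₁.2 i * c₂₂.2 i = 1 := by
    intro i hi
    have h := congrFun (congrArg Prod.snd e2) i
    simp only [zwrEmb, zwrMul, h21, add_zero, if_neg hi] at h
    exact h.symm
  have q1' : ∀ i : ℤ, i ≠ 0 → c₁₂.2 i * c₁₁.2 i = 1 := by
    intro i hi
    rw [eq_inv_of_mul_eq_one_left (q1 i hi)]
    simp
  have q2' : ∀ i : ℤ, i ≠ 0 → c₂₂.2 i * c₂₁.2 i = 1 := by
    intro i hi
    rw [eq_inv_of_mul_eq_one_left (q2 i hi)]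
    simp
  have q1z : a₁ = c₁₁.2 0 * c₁₂.2 0 := by
    have h := congrFun (congrArg Prod.snd e1) 0
    simpa [zwrEmb, zwrMul, h11] using h
  have q2z : a₂ = c₂₁.2 0 * c₂₂.2 0 := by
    have h := congrFun (congrArg Prod.snd e2) 0
    simpa [zwrEmb, zwrMul, h21] using h
  have q3z : b₁ = c₁₁.2 0 * c₂₁.2 0 := by
    have h := congrFun (congrArg Prod.snd e3) 0
    simpa [zwrEmb, zwrMul, h11] using h
  have q4z : b₂ = c₁₂.2 0 * c₂₂.2 0 := by
    have h := congrFun (congrArg Prod.snd e4) 0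
    simpa [zwrEmb, zwrMul, h12] using h
  exact ⟨c₁₁.2 0, c₁₂.2 0, c₂₁.2 0, c₂₂.2 0,
    hkey c₁₁ c₁₂ h11 h12 m11 p11 p12 q1,
    hkey c₁₂ c₁₁ h12 h11 m12 p12 p11 q1',
    hkey c₂₁ c₂₂ h21 h22 m21 p21 p22 q2,
    hkey c₂₂ c₂₁ h22 h21 m22 p22 p21 q2',
    q1z, q2z, q3z, q4z⟩

end ZwrAux

/-- For a directed po-group `G`, if the right wreath product
`ℤ →wr G` (resp. the left wreath product `ℤ ←wr G`) satisfies RDP, then so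
does `G`. -/
theorem rdp_of_zwr_rdp {G : Type*} [Group G] [PartialOrder G]
    [CovariantClass G G (· * ·) (· ≤ ·)]
    [CovariantClass G G (Function.swap (· * ·)) (· ≤ ·)]
    (hdir : ∀ x y : G, ∃ z : G, x ≤ z ∧ y ≤ z) :
    (RDPWithOn (zwrS G) (fun p q : ℤ × (ℤ → G) => zwrMul p q) (zwrOne G) rLE →
      RDPWith (fun a b : G => a * b) 1 (· ≤ ·)) ∧
    (RDPWithOn (zwrS G) (fun p q : ℤ × (ℤ → G) => zwrMul p q) (zwrOne G) lLE →
      RDPWith (fun a b : G => a * b) 1 (· ≤ ·)) :=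
  ⟨fun hR => rdp_main_aux (fun _ h => rLE_fst h) (fun _ h => zwrEmb_pos_r h)
      (fun _ _ h1 h2 hm hp hq hpq => key_r h1 h2 hm hp hq hpq) hR,
   fun hR => rdp_main_aux (fun _ h => lLE_fst h) (fun _ h => zwrEmb_pos_l h)
      (fun _ _ h1 h2 hm hp hq hpq => key_l h1 h2 hm hp hq hpq) hR⟩
end
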